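/- Let α, β ∈ (0,1) satisfy α + β > 1, and let t > 0. Then ∫_{ℝ²} |e^{i(x+y)t} − 1|² / |x + y|² · |x|^{−α} |y|^{−β} dx dy < ∞. -/

import Mathlib

open MeasureTheory Filter Set
open scoped ENNReal

namespace Stmt16Aux

lemma lintegral_neg_eq (f : ℝ → ℝ≥0∞) : ∫⁻ x : ℝ, f (-x) = ∫⁻ x, f x := by
  have h := lintegral_map_equiv (μ := (volume : Measure ℝ)) f (MeasurableEquiv.neg ℝ)
  have hmap : Measure.map (⇑(MeasurableEquiv.neg ℝ)) (volume : Measure ℝ) = volume := by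
    have := Measure.map_neg_eq_self (volume : Measure ℝ)
    exact this
  rw [hmap] at h
  simpa using h.symm

lemma setLIntegral_neg_preimage (f : ℝ → ℝ≥0∞) (hf : ∀ x, f (-x) = f x) {s : Set ℝ}
    (hs : MeasurableSet s) :
    ∫⁻ u in (fun x : ℝ => -x) ⁻¹' s, f u = ∫⁻ u in s, f u := by
  rw [← lintegral_indicator (hs.preimage measurable_neg), ← lintegral_indicator hs,
    ← lintegral_neg_eq (s.indicator f)]
  congr 1
  funext x
  by_cases h : -x ∈ s
  · rw [indicator_of_mem h, indicator_of_mem (by exact h), hf]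
  · rw [indicator_of_notMem h, indicator_of_notMem (by exact h)]

lemma lintegral_ofReal_lt_top {f : ℝ → ℝ} {s : Set ℝ} (hf : IntegrableOn f s) :
    ∫⁻ u in s, ENNReal.ofReal (f u) < ⊤ := by
  refine lt_of_le_of_lt (lintegral_mono fun u => ?_) hf.2
  rw [Real.enorm_eq_ofReal_abs]
  exact ENNReal.ofReal_le_ofReal (le_abs_self _)

lemma finite_small_onesided {c : ℝ} (hc : -1 < c) (r : ℝ) :
    ∫⁻ u in Ioo (0:ℝ) r, ENNReal.ofReal (|u| ^ c) < ⊤ := by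
  have h1 : ∫⁻ u in Ioo (0:ℝ) r, ENNReal.ofReal (|u| ^ c)
      = ∫⁻ u in Ioo (0:ℝ) r, ENNReal.ofReal (u ^ c) := by
    refine setLIntegral_congr_fun measurableSet_Ioo (fun u hu => ?_)
    rw [abs_of_pos hu.1]
  rw [h1]
  exact lintegral_ofReal_lt_top
    (((intervalIntegral.intervalIntegrable_rpow' (a := 0) (b := r) hc).1).mono_set
      Ioo_subset_Ioc_self)

lemma finite_small_abs {c : ℝ} (hc : -1 < c) (r : ℝ) :
    ∫⁻ u in Ioo (-r) r, ENNReal.ofReal (|u| ^ c) < ⊤ := by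
  have hsub : Ioo (-r) r ⊆ (Ioo (-r) 0 ∪ Ioo 0 r) ∪ {0} := by
    intro x hx
    rcases lt_trichotomy x 0 with h | h | h
    · exact Or.inl (Or.inl ⟨hx.1, h⟩)
    · exact Or.inr (by simp [h])
    · exact Or.inl (Or.inr ⟨h, hx.2⟩)
  refine lt_of_le_of_lt (lintegral_mono_set hsub) ?_
  refine lt_of_le_of_lt (lintegral_union_le _ _ _) ?_
  have h0 : ∫⁻ u in ({0} : Set ℝ), ENNReal.ofReal (|u| ^ c) = 0 :=
    setLIntegral_measure_zero _ _ Real.volume_singleton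
  have hneg : ∫⁻ u in Ioo (-r) 0, ENNReal.ofReal (|u| ^ c)
      = ∫⁻ u in Ioo (0:ℝ) r, ENNReal.ofReal (|u| ^ c) := by
    have hset : Ioo (-r) 0 = (fun x : ℝ => -x) ⁻¹' Ioo (0:ℝ) r := by
      ext x
      simp only [mem_preimage, mem_Ioo]
      constructor
      · rintro ⟨h1, h2⟩; constructor <;> linarith
      · rintro ⟨h1, h2⟩; constructor <;> linarith
    rw [hset]
    exact setLIntegral_neg_preimage _ (fun x => by rw [abs_neg]) measurableSet_Ioo
  rw [h0, add_zero]
  refine lt_of_le_of_lt (lintegral_union_le _ _ _) ?_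
  rw [hneg]
  have := finite_small_onesided hc r
  exact ENNReal.add_lt_top.2 ⟨this, this⟩

lemma finite_tail_abs {c : ℝ} (hc : c < -1) {r : ℝ} (hr : 0 < r) :
    ∫⁻ u in {u : ℝ | r < |u|}, ENNReal.ofReal (|u| ^ c) < ⊤ := by
  have hone : ∫⁻ u in Ioi r, ENNReal.ofReal (|u| ^ c) < ⊤ := by
    have h1 : ∫⁻ u in Ioi r, ENNReal.ofReal (|u| ^ c)
        = ∫⁻ u in Ioi r, ENNReal.ofReal (u ^ c) := by
      refine setLIntegral_congr_fun measurableSet_Ioi (fun u hu => ?_)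
      rw [abs_of_pos (lt_trans hr hu)]
    rw [h1]
    exact lintegral_ofReal_lt_top (integrableOn_Ioi_rpow_of_lt hc hr)
  have hset : {u : ℝ | r < |u|} = Iio (-r) ∪ Ioi r := by
    ext u
    simp only [mem_setOf_eq, mem_union, mem_Iio, mem_Ioi, lt_abs]
    constructor
    · rintro (h | h)
      · exact Or.inr h
      · exact Or.inl (by linarith)
    · rintro (h | h)
      · exact Or.inr (by linarith)
      · exact Or.inl h
  rw [hset]
  refine lt_of_le_of_lt (lintegral_union_le _ _ _) ?_
  have hneg : ∫⁻ u in Iio (-r), ENNReal.ofReal (|u| ^ c)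
      = ∫⁻ u in Ioi r, ENNReal.ofReal (|u| ^ c) := by
    have hpre : Iio (-r) = (fun x : ℝ => -x) ⁻¹' Ioi r := by
      ext x
      simp only [mem_preimage, mem_Iio, mem_Ioi]
      constructor <;> intro h <;> linarith
    rw [hpre]
    exact setLIntegral_neg_preimage _ (fun x => by rw [abs_neg]) measurableSet_Ioi
  rw [hneg]
  exact ENNReal.add_lt_top.2 ⟨hone, hone⟩


lemma half_rpow_neg (c : ℝ) : ((1 : ℝ) / 2) ^ (-c) = 2 ^ c := by
  rw [one_div, Real.inv_rpow (by norm_num : (0:ℝ) ≤ 2),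
    Real.rpow_neg (by norm_num : (0:ℝ) ≤ 2), inv_inv]

lemma le_four {a b1 b2 b3 b4 : ℝ≥0∞} (h : a ≤ b1 ∨ a ≤ b2 ∨ a ≤ b3 ∨ a ≤ b4) :
    a ≤ b1 + b2 + b3 + b4 := by
  rcases h with h|h|h|h
  · exact le_add_right (le_add_right (le_add_right h))
  · exact le_add_right (le_add_right (le_trans h le_add_self))
  · exact le_add_right (le_trans h le_add_self)
  · exact le_trans h le_add_self




lemma J1_lt_top {α β : ℝ} (hα : α ∈ Ioo (0:ℝ) 1) (hβ : β ∈ Ioo (0:ℝ) 1)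
    (hab : 1 < α + β) :
    ∫⁻ u : ℝ, ENNReal.ofReal (|u| ^ (-α)) * ENNReal.ofReal (|1 - u| ^ (-β)) < ⊤ := by
  obtain ⟨hα0, hα1⟩ := hα
  obtain ⟨hβ0, hβ1⟩ := hβ
  set c2β : ℝ≥0∞ := ENNReal.ofReal ((2:ℝ) ^ β) with hc2β
  set c2α : ℝ≥0∞ := ENNReal.ofReal ((2:ℝ) ^ α) with hc2α
  set B1 : ℝ → ℝ≥0∞ :=
    (Ioo (-(1/2) : ℝ) (1/2)).indicator (fun u => c2β * ENNReal.ofReal (|u| ^ (-α))) with hB1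
  set B2 : ℝ → ℝ≥0∞ :=
    (Ioo ((1:ℝ)/2) (3/2)).indicator (fun u => c2α * ENNReal.ofReal (|1 - u| ^ (-β))) with hB2
  set B3 : ℝ → ℝ≥0∞ := (Icc (-(2:ℝ)) 2).indicator (fun _ => c2α * c2β) with hB3
  set B4 : ℝ → ℝ≥0∞ :=
    {u : ℝ | 2 < |u|}.indicator (fun u => c2β * ENNReal.ofReal (|u| ^ (-(α+β)))) with hB4
  have hrnn : ∀ (a : ℝ) (e : ℝ), 0 ≤ |a| ^ e := fun a e => Real.rpow_nonneg (abs_nonneg a) e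
  have hpoint : ∀ u : ℝ, ENNReal.ofReal (|u| ^ (-α)) * ENNReal.ofReal (|1 - u| ^ (-β))
      ≤ B1 u + B2 u + B3 u + B4 u := by
    intro u
    refine le_four ?_
    by_cases h1 : |u| < 1/2
    · left
      have hmem : u ∈ Ioo (-(1/2) : ℝ) (1/2) := by
        have := abs_lt.1 h1; exact ⟨this.1, this.2⟩
      have hge : (1:ℝ)/2 ≤ |1 - u| := by
        have := abs_sub_abs_le_abs_sub (1:ℝ) u
        rw [abs_one] at this; linarith
      have hb : |1 - u| ^ (-β) ≤ 2 ^ β := by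
        rw [← half_rpow_neg β]
        exact Real.rpow_le_rpow_of_nonpos (by norm_num) hge (by linarith)
      rw [hB1, indicator_of_mem hmem, mul_comm]
      exact mul_le_mul_left (ENNReal.ofReal_le_ofReal hb) _
    · by_cases h2 : |u - 1| < 1/2
      · right; left
        have hmem : u ∈ Ioo ((1:ℝ)/2) (3/2) := by
          have := abs_lt.1 h2; constructor <;> [linarith [this.1]; linarith [this.2]]
        have hge : (1:ℝ)/2 ≤ |u| := by
          have h' := abs_lt.1 h2
          have : (1:ℝ)/2 < u := by linarith [h'.1]
          calc (1:ℝ)/2 ≤ u := le_of_lt this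
            _ ≤ |u| := le_abs_self u
        have hb : |u| ^ (-α) ≤ 2 ^ α := by
          rw [← half_rpow_neg α]
          exact Real.rpow_le_rpow_of_nonpos (by norm_num) hge (by linarith)
        rw [hB2, indicator_of_mem hmem]
        exact mul_le_mul_left (ENNReal.ofReal_le_ofReal hb) _
      · by_cases h3 : |u| ≤ 2
        · right; right; left
          have hmem : u ∈ Icc (-(2:ℝ)) 2 := by
            have := abs_le.1 h3; exact ⟨this.1, this.2⟩
          have hgeu : (1:ℝ)/2 ≤ |u| := le_of_not_gt h1
          have hge1u : (1:ℝ)/2 ≤ |1 - u| := by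
            rw [abs_sub_comm]; exact le_of_not_gt h2
          have hb1 : |u| ^ (-α) ≤ 2 ^ α := by
            rw [← half_rpow_neg α]
            exact Real.rpow_le_rpow_of_nonpos (by norm_num) hgeu (by linarith)
          have hb2 : |1 - u| ^ (-β) ≤ 2 ^ β := by
            rw [← half_rpow_neg β]
            exact Real.rpow_le_rpow_of_nonpos (by norm_num) hge1u (by linarith)
          rw [hB3, indicator_of_mem hmem]
          exact mul_le_mul' (ENNReal.ofReal_le_ofReal hb1) (ENNReal.ofReal_le_ofReal hb2)
        · right; right; right
          have h4 : 2 < |u| := lt_of_not_ge h3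
          have hmem : u ∈ {u : ℝ | 2 < |u|} := h4
          have hupos : (0:ℝ) < |u| := by linarith
          have hge : |u| / 2 ≤ |1 - u| := by
            have := abs_sub_abs_le_abs_sub u (1:ℝ)
            rw [abs_one, abs_sub_comm] at this
            linarith
          have hb : |1 - u| ^ (-β) ≤ |u| ^ (-β) * 2 ^ β := by
            have h5 : (|u| / 2) ^ (-β) = |u| ^ (-β) * 2 ^ β := by
              rw [div_eq_mul_one_div,
                Real.mul_rpow (abs_nonneg u) (by norm_num : (0:ℝ) ≤ 1/2), half_rpow_neg]
            rw [← h5]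
            exact Real.rpow_le_rpow_of_nonpos (by positivity) hge (by linarith)
          rw [hB4, indicator_of_mem hmem]
          calc ENNReal.ofReal (|u| ^ (-α)) * ENNReal.ofReal (|1 - u| ^ (-β))
              ≤ ENNReal.ofReal (|u| ^ (-α)) * ENNReal.ofReal (|u| ^ (-β) * 2 ^ β) :=
                mul_le_mul_right (ENNReal.ofReal_le_ofReal hb) _
            _ = ENNReal.ofReal (|u| ^ (-α) * (|u| ^ (-β) * 2 ^ β)) :=
                (ENNReal.ofReal_mul (hrnn u (-α))).symm
            _ = ENNReal.ofReal ((2:ℝ) ^ β * |u| ^ (-(α+β))) := by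
                congr 1
                rw [show -(α+β) = -α + -β by ring, Real.rpow_add hupos]
                ring
            _ = c2β * ENNReal.ofReal (|u| ^ (-(α+β))) :=
                ENNReal.ofReal_mul (Real.rpow_nonneg (by norm_num) β)
  have hm1 : Measurable B1 :=
    (measurable_const.mul ((continuous_abs.measurable.pow measurable_const).ennreal_ofReal)).indicator
      measurableSet_Ioo
  have hm2 : Measurable B2 :=
    (measurable_const.mul (((continuous_const.sub continuous_id).abs.measurable.pow
      measurable_const).ennreal_ofReal)).indicator measurableSet_Ioo
  have hm3 : Measurable B3 := measurable_const.indicator measurableSet_Icc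
  have hset4 : MeasurableSet {u : ℝ | 2 < |u|} :=
    (isOpen_lt continuous_const continuous_abs).measurableSet
  have hm4 : Measurable B4 :=
    (measurable_const.mul ((continuous_abs.measurable.pow measurable_const).ennreal_ofReal)).indicator
      hset4
  have hI1 : ∫⁻ u, B1 u < ⊤ := by
    rw [hB1, lintegral_indicator measurableSet_Ioo,
      lintegral_const_mul' _ _ ENNReal.ofReal_ne_top]
    exact ENNReal.mul_lt_top ENNReal.ofReal_lt_top (finite_small_abs (by linarith) (1/2))
  have hI2 : ∫⁻ u, B2 u < ⊤ := by
    set h : ℝ → ℝ≥0∞ :=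
      (Ioo (-(1/2) : ℝ) (1/2)).indicator (fun v => c2α * ENNReal.ofReal (|v| ^ (-β))) with hh
    have hB2h : B2 = fun u => h (u + (-1)) := by
      funext u
      by_cases hm : u ∈ Ioo ((1:ℝ)/2) (3/2)
      · have hm' : u + (-1) ∈ Ioo (-(1/2) : ℝ) (1/2) := by
          constructor <;> [linarith [hm.1]; linarith [hm.2]]
        rw [hB2, hh, indicator_of_mem hm, indicator_of_mem hm']
        congr 2
        rw [show u + (-1) = -(1 - u) by ring, abs_neg]
      · have hm' : u + (-1) ∉ Ioo (-(1/2) : ℝ) (1/2) := by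
          intro hc
          exact hm ⟨by linarith [hc.1], by linarith [hc.2]⟩
        rw [hB2, hh, indicator_of_notMem hm, indicator_of_notMem hm']
    rw [hB2h, lintegral_add_right_eq_self h (-1), hh,
      lintegral_indicator measurableSet_Ioo, lintegral_const_mul' _ _ ENNReal.ofReal_ne_top]
    exact ENNReal.mul_lt_top ENNReal.ofReal_lt_top (finite_small_abs (by linarith) (1/2))
  have hI3 : ∫⁻ u, B3 u < ⊤ := by
    rw [hB3, lintegral_indicator measurableSet_Icc, setLIntegral_const]
    refine ENNReal.mul_lt_top (ENNReal.mul_lt_top ENNReal.ofReal_lt_top ENNReal.ofReal_lt_top) ?_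
    rw [Real.volume_Icc]
    exact ENNReal.ofReal_lt_top
  have hI4 : ∫⁻ u, B4 u < ⊤ := by
    rw [hB4, lintegral_indicator hset4, lintegral_const_mul' _ _ ENNReal.ofReal_ne_top]
    exact ENNReal.mul_lt_top ENNReal.ofReal_lt_top
      (finite_tail_abs (by linarith) (by norm_num : (0:ℝ) < 2))
  calc ∫⁻ u : ℝ, ENNReal.ofReal (|u| ^ (-α)) * ENNReal.ofReal (|1 - u| ^ (-β))
      ≤ ∫⁻ u, (B1 u + B2 u + B3 u + B4 u) := lintegral_mono hpoint
    _ = (∫⁻ u, B1 u) + (∫⁻ u, B2 u) + (∫⁻ u, B3 u) + (∫⁻ u, B4 u) := by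
        rw [lintegral_add_left (f := fun u => B1 u + B2 u + B3 u) ((hm1.add hm2).add hm3),
          lintegral_add_left (f := fun u => B1 u + B2 u) (hm1.add hm2),
          lintegral_add_left hm1]
    _ < ⊤ := by
        exact ENNReal.add_lt_top.2 ⟨ENNReal.add_lt_top.2 ⟨ENNReal.add_lt_top.2 ⟨hI1, hI2⟩, hI3⟩, hI4⟩


lemma J_scale {α β : ℝ} {s : ℝ} (hs : s ≠ 0) :
    ∫⁻ x : ℝ, ENNReal.ofReal (|x| ^ (-α)) * ENNReal.ofReal (|s - x| ^ (-β))
      = ENNReal.ofReal (|s| ^ (1 - (α + β))) *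
        ∫⁻ u : ℝ, ENNReal.ofReal (|u| ^ (-α)) * ENNReal.ofReal (|1 - u| ^ (-β)) := by
  set g : ℝ → ℝ≥0∞ := fun x => ENNReal.ofReal (|x| ^ (-α)) * ENNReal.ofReal (|s - x| ^ (-β))
    with hg
  have hgm : Measurable g :=
    ((continuous_abs.measurable.pow measurable_const).ennreal_ofReal).mul
      (((continuous_const.sub continuous_id).abs.measurable.pow measurable_const).ennreal_ofReal)
  have key : ∫⁻ u, g (s * u) = ENNReal.ofReal |s⁻¹| * ∫⁻ x, g x := by
    rw [← lintegral_map hgm (measurable_const_mul s), Real.map_volume_mul_left hs,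
      lintegral_smul_measure, smul_eq_mul]
  have habs : ENNReal.ofReal |s| * ENNReal.ofReal |s⁻¹| = 1 := by
    rw [← ENNReal.ofReal_mul (abs_nonneg _), ← abs_mul, mul_inv_cancel₀ hs, abs_one,
      ENNReal.ofReal_one]
  have key2 : ∫⁻ x, g x = ENNReal.ofReal |s| * ∫⁻ u, g (s * u) := by
    rw [key, ← mul_assoc, habs, one_mul]
  have hspos : (0:ℝ) < |s| := abs_pos.2 hs
  have hgs : ∀ u : ℝ, g (s * u)
      = (ENNReal.ofReal (|s| ^ (-α)) * ENNReal.ofReal (|s| ^ (-β))) *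
        (ENNReal.ofReal (|u| ^ (-α)) * ENNReal.ofReal (|1 - u| ^ (-β))) := by
    intro u
    have h1 : |s * u| ^ (-α) = |s| ^ (-α) * |u| ^ (-α) := by
      rw [abs_mul, Real.mul_rpow (abs_nonneg _) (abs_nonneg _)]
    have h2 : |s - s * u| ^ (-β) = |s| ^ (-β) * |1 - u| ^ (-β) := by
      rw [show s - s * u = s * (1 - u) by ring, abs_mul,
        Real.mul_rpow (abs_nonneg _) (abs_nonneg _)]
    rw [hg]
    simp only []
    rw [h1, h2, ENNReal.ofReal_mul (Real.rpow_nonneg (abs_nonneg s) _),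
      ENNReal.ofReal_mul (Real.rpow_nonneg (abs_nonneg s) _)]
    ring
  rw [key2]
  simp only [hgs]
  rw [lintegral_const_mul' _ _
    (ENNReal.mul_ne_top ENNReal.ofReal_ne_top ENNReal.ofReal_ne_top), ← mul_assoc]
  congr 1
  rw [← mul_assoc, ← ENNReal.ofReal_mul (abs_nonneg s),
    ← ENNReal.ofReal_mul (by positivity : (0:ℝ) ≤ |s| * |s| ^ (-α))]
  congr 1
  nth_rewrite 1 [show |s| = |s| ^ (1:ℝ) from (Real.rpow_one _).symm]
  rw [← Real.rpow_add hspos, ← Real.rpow_add hspos]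
  ring_nf





lemma L3_lt_top {α β t : ℝ} (hα : α ∈ Ioo (0:ℝ) 1) (hβ : β ∈ Ioo (0:ℝ) 1)
    (hab : 1 < α + β) :
    ∫⁻ s : ℝ, ENNReal.ofReal (min (t ^ 2) (4 / s ^ 2)) *
      ENNReal.ofReal (|s| ^ (1 - (α + β))) < ⊤ := by
  obtain ⟨hα0, hα1⟩ := hα
  obtain ⟨hβ0, hβ1⟩ := hβ
  set C1 : ℝ → ℝ≥0∞ :=
    (Ioo (-(1:ℝ)) 1).indicator
      (fun s => ENNReal.ofReal (t ^ 2) * ENNReal.ofReal (|s| ^ (1 - (α + β)))) with hC1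
  set C2 : ℝ → ℝ≥0∞ :=
    {s : ℝ | 1 ≤ |s|}.indicator
      (fun s => ENNReal.ofReal (4:ℝ) * ENNReal.ofReal (|s| ^ (-1 - (α + β)))) with hC2
  have hpoint : ∀ s : ℝ, ENNReal.ofReal (min (t ^ 2) (4 / s ^ 2)) *
      ENNReal.ofReal (|s| ^ (1 - (α + β))) ≤ C1 s + C2 s := by
    intro s
    by_cases h1 : |s| < 1
    · have hmem : s ∈ Ioo (-(1:ℝ)) 1 := by
        have := abs_lt.1 h1; exact ⟨this.1, this.2⟩
      refine le_trans ?_ le_self_add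
      rw [hC1, indicator_of_mem hmem]
      exact mul_le_mul_left (ENNReal.ofReal_le_ofReal (min_le_left _ _)) _
    · have h1' : (1:ℝ) ≤ |s| := le_of_not_gt h1
      have hmem : s ∈ {s : ℝ | 1 ≤ |s|} := h1'
      have hspos : (0:ℝ) < |s| := by linarith
      refine le_trans ?_ le_add_self
      rw [hC2, indicator_of_mem hmem]
      have hkey : (4 / s ^ 2) * |s| ^ (1 - (α + β)) = 4 * |s| ^ (-1 - (α + β)) := by
        rw [show s ^ 2 = |s| ^ ((2:ℕ):ℝ) by rw [Real.rpow_natCast, sq_abs],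
          div_mul_eq_mul_div, mul_div_assoc, ← Real.rpow_sub hspos]
        norm_num
        ring_nf
      calc ENNReal.ofReal (min (t ^ 2) (4 / s ^ 2)) * ENNReal.ofReal (|s| ^ (1 - (α + β)))
          ≤ ENNReal.ofReal (4 / s ^ 2) * ENNReal.ofReal (|s| ^ (1 - (α + β))) :=
            mul_le_mul_left (ENNReal.ofReal_le_ofReal (min_le_right _ _)) _
        _ = ENNReal.ofReal ((4 / s ^ 2) * |s| ^ (1 - (α + β))) :=
            (ENNReal.ofReal_mul (by positivity)).symm
        _ = ENNReal.ofReal (4 * |s| ^ (-1 - (α + β))) := by rw [hkey]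
        _ = ENNReal.ofReal (4:ℝ) * ENNReal.ofReal (|s| ^ (-1 - (α + β))) :=
            ENNReal.ofReal_mul (by norm_num)
  have hm1 : Measurable C1 :=
    (measurable_const.mul ((continuous_abs.measurable.pow measurable_const).ennreal_ofReal)).indicator
      measurableSet_Ioo
  have hset2 : MeasurableSet {s : ℝ | 1 ≤ |s|} :=
    (isClosed_le continuous_const continuous_abs).measurableSet
  have hI1 : ∫⁻ s, C1 s < ⊤ := by
    rw [hC1, lintegral_indicator measurableSet_Ioo,
      lintegral_const_mul' _ _ ENNReal.ofReal_ne_top]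
    exact ENNReal.mul_lt_top ENNReal.ofReal_lt_top (finite_small_abs (by linarith) 1)
  have hI2 : ∫⁻ s, C2 s < ⊤ := by
    rw [hC2, lintegral_indicator hset2, lintegral_const_mul' _ _ ENNReal.ofReal_ne_top]
    refine ENNReal.mul_lt_top ENNReal.ofReal_lt_top ?_
    refine lt_of_le_of_lt (lintegral_mono_set ?_) (finite_tail_abs (c := -1 - (α + β))
      (by linarith) (by norm_num : (0:ℝ) < 1/2))
    intro u hu
    have : (1:ℝ) ≤ |u| := hu
    show (1:ℝ)/2 < |u|
    linarith
  calc ∫⁻ s : ℝ, ENNReal.ofReal (min (t ^ 2) (4 / s ^ 2)) *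
      ENNReal.ofReal (|s| ^ (1 - (α + β)))
      ≤ ∫⁻ s, (C1 s + C2 s) := lintegral_mono hpoint
    _ = (∫⁻ s, C1 s) + ∫⁻ s, C2 s := lintegral_add_left hm1 _
    _ < ⊤ := ENNReal.add_lt_top.2 ⟨hI1, hI2⟩


lemma kernel_bound (t : ℝ) (s : ℝ) :
    ‖Complex.exp (Complex.I * s * t) - 1‖ ^ 2 / |s| ^ 2 ≤ min (t ^ 2) (4 / s ^ 2) := by
  rcases eq_or_ne s 0 with rfl | hs
  · simp [min_eq_right (sq_nonneg t)]
  · have hθ : Complex.I * (s : ℂ) * (t : ℂ) = ((s * t : ℝ) : ℂ) * Complex.I := by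
      push_cast; ring
    rw [hθ, Complex.exp_mul_I, ← Complex.ofReal_cos, ← Complex.ofReal_sin]
    set θ := s * t with hθdef
    have hnorm : ‖((Real.cos θ : ℂ) + (Real.sin θ : ℂ) * Complex.I - 1)‖ ^ 2
        = (Real.cos θ - 1) ^ 2 + (Real.sin θ) ^ 2 := by
      rw [Complex.sq_norm, Complex.normSq_apply]
      simp [Complex.cos_ofReal_re, Complex.sin_ofReal_re]
      ring
    rw [hnorm]
    have h2cos : (Real.cos θ - 1) ^ 2 + Real.sin θ ^ 2 = 2 - 2 * Real.cos θ := by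
      nlinarith [Real.sin_sq_add_cos_sq θ]
    rw [h2cos, sq_abs]
    have hs2 : (0 : ℝ) < s ^ 2 := by positivity
    refine le_min ?_ ?_
    · rw [div_le_iff₀ hs2]
      have hθsq : θ ^ 2 = t ^ 2 * s ^ 2 := by rw [hθdef]; ring
      nlinarith [Real.one_sub_sq_div_two_le_cos (x := θ)]
    · have h4 : 2 - 2 * Real.cos θ ≤ 4 := by nlinarith [Real.neg_one_le_cos θ]
      gcongr


end Stmt16Aux

open Stmt16Aux in
theorem stmt16 (α β : ℝ) (hα : α ∈ Set.Ioo (0 : ℝ) 1) (hβ : β ∈ Set.Ioo (0 : ℝ) 1)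
    (hab : 1 < α + β) (t : ℝ) (ht : 0 < t) :
    ∫⁻ p : ℝ × ℝ,
      ENNReal.ofReal
        (‖Complex.exp (Complex.I * (p.1 + p.2) * t) - 1‖ ^ 2 / |p.1 + p.2| ^ 2 *
          (|p.1| ^ (-α) * |p.2| ^ (-β))) < ⊤ := by
  set K : ℝ → ℝ≥0∞ := fun s => ENNReal.ofReal (min (t ^ 2) (4 / s ^ 2)) with hK
  set A : ℝ → ℝ≥0∞ := fun x => ENNReal.ofReal (|x| ^ (-α)) with hA
  set Bf : ℝ → ℝ≥0∞ := fun y => ENNReal.ofReal (|y| ^ (-β)) with hBf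
  have hAm : Measurable A := (continuous_abs.measurable.pow measurable_const).ennreal_ofReal
  have hBm : Measurable Bf := (continuous_abs.measurable.pow measurable_const).ennreal_ofReal
  have hKm : Measurable K :=
    (measurable_const.min (measurable_const.div ((continuous_pow 2).measurable))).ennreal_ofReal
  set W : ℝ × ℝ → ℝ≥0∞ := fun p => A p.1 * (K (p.1 + p.2) * Bf p.2) with hW
  have hWm : Measurable W :=
    (hAm.comp measurable_fst).mul
      ((hKm.comp (measurable_fst.add measurable_snd)).mul (hBm.comp measurable_snd))
  -- STEP 1: pointwise bound
  have hstep1 : ∀ p : ℝ × ℝ,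
      ENNReal.ofReal
        (‖Complex.exp (Complex.I * (p.1 + p.2) * t) - 1‖ ^ 2 / |p.1 + p.2| ^ 2 *
          (|p.1| ^ (-α) * |p.2| ^ (-β))) ≤ W p := by
    rintro ⟨x, y⟩
    have hnn1 : (0:ℝ) ≤ ‖Complex.exp (Complex.I * (x + y) * t) - 1‖ ^ 2 / |x + y| ^ 2 := by
      positivity
    have hnn2 : (0:ℝ) ≤ |x| ^ (-α) := Real.rpow_nonneg (abs_nonneg _) _
    rw [ENNReal.ofReal_mul hnn1, ENNReal.ofReal_mul hnn2]
    have hcast : (Complex.I * (↑x + ↑y) * ↑t : ℂ) = Complex.I * ((x + y : ℝ) : ℂ) * (t : ℂ) := by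
      push_cast; ring
    calc ENNReal.ofReal (‖Complex.exp (Complex.I * (↑x + ↑y) * ↑t) - 1‖ ^ 2 / |x + y| ^ 2) *
          (ENNReal.ofReal (|x| ^ (-α)) * ENNReal.ofReal (|y| ^ (-β)))
        ≤ K (x + y) * (A x * Bf y) := by
          refine mul_le_mul_left ?_ _
          rw [hcast]
          exact ENNReal.ofReal_le_ofReal (kernel_bound t (x + y))
      _ = W (x, y) := by rw [hW]; dsimp only; ring
  refine lt_of_le_of_lt (lintegral_mono hstep1) ?_
  -- STEP 2: iterated integral
  rw [MeasureTheory.Measure.volume_eq_prod, lintegral_prod _ hWm.aemeasurable]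
  -- STEP 3: translation in the inner integral
  have hstep3 : ∀ x : ℝ, ∫⁻ y, W (x, y)
      = ∫⁻ s, A x * (K s * ENNReal.ofReal (|s - x| ^ (-β))) := by
    intro x
    set φ : ℝ → ℝ≥0∞ := fun s => A x * (K s * ENNReal.ofReal (|s - x| ^ (-β))) with hφ
    have hφy : ∀ y : ℝ, W (x, y) = φ (y + x) := by
      intro y
      rw [hφ, hW]
      dsimp only
      rw [add_comm y x, add_sub_cancel_left]
    simp_rw [hφy]
    exact lintegral_add_right_eq_self φ x
  simp_rw [hstep3]
  -- STEP 4: swap integrals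
  set V : ℝ → ℝ → ℝ≥0∞ := fun x s => A x * (K s * ENNReal.ofReal (|s - x| ^ (-β))) with hV
  have hVm : Measurable (Function.uncurry V) := by
    apply ((hAm.comp measurable_fst).mul
      ((hKm.comp measurable_snd).mul
        (((continuous_snd.sub continuous_fst).abs.measurable.pow
          measurable_const).ennreal_ofReal)))
  have hswap : ∫⁻ x, ∫⁻ s, V x s = ∫⁻ s, ∫⁻ x, V x s := lintegral_lintegral_swap hVm.aemeasurable
  rw [show (∫⁻ x, ∫⁻ s, A x * (K s * ENNReal.ofReal (|s - x| ^ (-β)))) = ∫⁻ x, ∫⁻ s, V x s from rfl,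
    hswap]
  -- STEP 5: pull out K s and use scaling
  have hstep5 : ∀ s : ℝ, ∫⁻ x, V x s
      = K s * ∫⁻ x, A x * ENNReal.ofReal (|s - x| ^ (-β)) := by
    intro s
    rw [← lintegral_const_mul' _ _ ENNReal.ofReal_ne_top]
    congr 1
    funext x
    rw [hV]
    ring
  simp_rw [hstep5]
  set J1 : ℝ≥0∞ := ∫⁻ u : ℝ, ENNReal.ofReal (|u| ^ (-α)) * ENNReal.ofReal (|1 - u| ^ (-β))
    with hJ1def
  have hJ1 : J1 < ⊤ := J1_lt_top hα hβ hab
  have hbound : ∀ s : ℝ, K s * ∫⁻ x, A x * ENNReal.ofReal (|s - x| ^ (-β))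
      ≤ (K s * ENNReal.ofReal (|s| ^ (1 - (α + β)))) * J1 := by
    intro s
    rcases eq_or_ne s 0 with rfl | hs
    · have hK0 : K 0 = 0 := by
        rw [hK]
        norm_num
      rw [hK0, zero_mul, zero_mul, zero_mul]
    · rw [hA, J_scale hs, ← mul_assoc]
  refine lt_of_le_of_lt (lintegral_mono hbound) ?_
  rw [lintegral_mul_const' J1 _ hJ1.ne]
  exact ENNReal.mul_lt_top (L3_lt_top hα hβ hab) hJ1
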